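/- arXiv:1404.2405 — 2 statements merged into one kernel-verified Lean document; each statement's English description precedes it below -/
import Mathlib

section
/- Sobol'–Jansen identity for total effects: if X and X' are i.i.d. copies of the independent input vector with i-th coordinate resampled (X' agrees with X except X'_i is an independent copy of X_i), then for square-integrable Y = f(X), E[(f(X) − f(X'))²]/2 = Var(Y) − Cov(f(X), f(X')) = E[Var(Y | X_{−i})] = Var(Y)·S_{T_i}. -/
open MeasureTheory ProbabilityTheory
open scoped ENNReal

private lemma l2mul {δ : Type*} [MeasurableSpace δ] {μ : Measure δ} {u v : δ → ℝ}
    (hu : MemLp u 2 μ) (hv : MemLp v 2 μ) : Integrable (fun x => u x * v x) μ := by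
  have h : MemLp (u • v) 1 μ := hv.smul hu
  rw [memLp_one_iff_integrable] at h
  exact h

private lemma sq_expand {δ : Type*} [MeasurableSpace δ] {μ : Measure δ} {u v : δ → ℝ}
    (hu : MemLp u 2 μ) (hv : MemLp v 2 μ) :
    ∫ x, (u x - v x) ^ 2 ∂μ =
      ∫ x, u x ^ 2 ∂μ - 2 * ∫ x, u x * v x ∂μ + ∫ x, v x ^ 2 ∂μ := by
  have hu2 : Integrable (fun x => u x ^ 2) μ :=
    (memLp_two_iff_integrable_sq hu.aestronglyMeasurable).mp hu
  have hv2 : Integrable (fun x => v x ^ 2) μ :=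
    (memLp_two_iff_integrable_sq hv.aestronglyMeasurable).mp hv
  have huv : Integrable (fun x => u x * v x) μ := l2mul hu hv
  have h1 : ∫ x, (u x - v x) ^ 2 ∂μ
      = ∫ x, (u x ^ 2 - 2 * (u x * v x) + v x ^ 2) ∂μ := by
    refine integral_congr_ae (Filter.Eventually.of_forall fun x => ?_)
    ring
  have h4 : Integrable (fun x => u x ^ 2 - 2 * (u x * v x)) μ := by
    exact hu2.sub (huv.const_mul 2)
  rw [h1, integral_add h4 hv2, integral_sub hu2 (huv.const_mul 2), integral_const_mul]

theorem sobol_jansen_identity_total_effect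
    {Ω : Type*} [MeasureSpace Ω] [IsProbabilityMeasure (ℙ : Measure Ω)]
    {d : ℕ} (X : Fin d → Ω → ℝ) (i : Fin d)
    (hXmeas : ∀ j, Measurable (X j))
    (hXindep : iIndepFun X ℙ)
    (Z : Ω → ℝ) (hZ : Measurable Z)
    (hZlaw : Measure.map Z ℙ = Measure.map (X i) ℙ)
    (hZindep : IndepFun (fun ω => fun j => X j ω) Z ℙ)
    (X' : Fin d → Ω → ℝ)
    (hX' : X' = fun j => if j = i then Z else X j)
    (f : (Fin d → ℝ) → ℝ) (hf : Measurable f)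
    (Y Y' : Ω → ℝ)
    (hYdef : Y = fun ω => f (fun j => X j ω))
    (hY'def : Y' = fun ω => f (fun j => X' j ω))
    (hY2 : MemLp Y 2 ℙ) (hVar : 0 < variance Y ℙ) :
    (∫ ω, (Y ω - Y' ω) ^ 2 ∂ℙ) / 2 =
        variance Y ℙ - ∫ ω, (Y ω - ∫ ω', Y ω' ∂ℙ) * (Y' ω - ∫ ω', Y' ω' ∂ℙ) ∂ℙ ∧
    (∫ ω, (Y ω - Y' ω) ^ 2 ∂ℙ) / 2 =
        ∫ ω, (ℙ[(fun ω' => (Y ω' -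
            (ℙ[Y | MeasurableSpace.comap
              (fun ω'' => fun j : {j : Fin d // j ≠ i} => X j ω'') inferInstance]) ω') ^ 2)
          | MeasurableSpace.comap
              (fun ω'' => fun j : {j : Fin d // j ≠ i} => X j ω'') inferInstance]) ω ∂ℙ ∧
    (∫ ω, (Y ω - Y' ω) ^ 2 ∂ℙ) / 2 =
        variance Y ℙ *
          ((∫ ω, (ℙ[(fun ω' => (Y ω' -
              (ℙ[Y | MeasurableSpace.comap
                (fun ω'' => fun j : {j : Fin d // j ≠ i} => X j ω'') inferInstance]) ω') ^ 2)
            | MeasurableSpace.comap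
                (fun ω'' => fun j : {j : Fin d // j ≠ i} => X j ω'') inferInstance]) ω ∂ℙ)
            / variance Y ℙ) := by
  classical
  set φ : Ω → ({j : Fin d // j ≠ i} → ℝ) :=
    fun ω'' => fun j : {j : Fin d // j ≠ i} => X j ω'' with hφdef
  have hφm : Measurable φ := measurable_pi_lambda _ fun j => hXmeas j
  have hm : MeasurableSpace.comap φ inferInstance ≤ (inferInstance : MeasurableSpace Ω) :=
    hφm.comap_le
  set ν : Measure ℝ := Measure.map (X i) ℙ with hνdef
  set μA : Measure ({j : Fin d // j ≠ i} → ℝ) := Measure.map φ ℙ with hμAdef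
  haveI : IsProbabilityMeasure ν := Measure.isProbabilityMeasure_map (hXmeas i).aemeasurable
  haveI : IsProbabilityMeasure μA := Measure.isProbabilityMeasure_map hφm.aemeasurable
  set combine : ({j : Fin d // j ≠ i} → ℝ) → ℝ → (Fin d → ℝ) :=
    fun x t j => if h : j = i then t else x ⟨j, h⟩ with hcombdef
  have hXcomb : ∀ ω, (fun j => X j ω) = combine (φ ω) (X i ω) := by
    intro ω; funext j
    rcases eq_or_ne j i with h | h
    · subst h; simp [hcombdef]
    · simp [hcombdef, h, hφdef]
  have hX'comb : ∀ ω, (fun j => X' j ω) = combine (φ ω) (Z ω) := by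
    intro ω; funext j
    rcases eq_or_ne j i with h | h
    · subst h; simp [hcombdef, hX']
    · simp [hcombdef, hX', h, hφdef]
  set H : (({j : Fin d // j ≠ i} → ℝ) × ℝ) → ℝ := fun p => f (combine p.1 p.2) with hHdef
  have hcm : Measurable fun p : (({j : Fin d // j ≠ i} → ℝ) × ℝ) => combine p.1 p.2 := by
    refine measurable_pi_lambda _ fun j => ?_
    by_cases h : j = i
    · simpa [hcombdef, h] using measurable_snd
    · simpa [hcombdef, h, Function.comp_def] using
        (measurable_pi_apply (⟨j, h⟩ : {j : Fin d // j ≠ i})).comp measurable_fst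
  have hHm : Measurable H := hf.comp hcm
  set g : ({j : Fin d // j ≠ i} → ℝ) → ℝ := fun x => ∫ t, H (x, t) ∂ν with hgdef
  have hgsm : StronglyMeasurable g := hHm.stronglyMeasurable.integral_prod_right'
  have hgm : Measurable g := hgsm.measurable
  set pair : Ω → (({j : Fin d // j ≠ i} → ℝ) × ℝ) := fun ω => (φ ω, X i ω) with hpairdef
  have hpairm : Measurable pair := hφm.prodMk (hXmeas i)
  have hpairZm : Measurable (fun ω => (φ ω, Z ω)) := hφm.prodMk hZ
  -- pointwise identifications
  have hYp : ∀ ω, Y ω = H (pair ω) := by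
    intro ω; rw [hYdef]; exact congrArg f (hXcomb ω)
  have hY'p : ∀ ω, Y' ω = H (φ ω, Z ω) := by
    intro ω; rw [hY'def]; exact congrArg f (hX'comb ω)
  have hYc : Y = H ∘ pair := funext fun ω => hYp ω
  have hY'c : Y' = H ∘ (fun ω => (φ ω, Z ω)) := funext fun ω => hY'p ω
  -- independence and joint laws
  have hpind : IndepFun φ (X i) ℙ := by
    have base := hXindep.indepFun_finset ({i}ᶜ) {i} disjoint_compl_left hXmeas
    have h1 : Measurable (fun v : (↥(({i} : Finset (Fin d))ᶜ) → ℝ) =>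
        fun j : {j : Fin d // j ≠ i} =>
          v ⟨j.1, Finset.mem_compl.mpr fun hmem => j.2 (Finset.mem_singleton.mp hmem)⟩) :=
      measurable_pi_lambda _ fun j => measurable_pi_apply _
    have h2 : Measurable (fun v : (↥({i} : Finset (Fin d)) → ℝ) =>
        v ⟨i, Finset.mem_singleton_self i⟩) := measurable_pi_apply _
    exact base.comp h1 h2
  have hmap_pair : Measure.map pair ℙ = μA.prod ν :=
    (indepFun_iff_map_prod_eq_prod_map_map hφm.aemeasurable (hXmeas i).aemeasurable).mp hpind
  have hφZind : IndepFun φ Z ℙ := by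
    have hr : Measurable (fun v : (Fin d → ℝ) => fun j : {j : Fin d // j ≠ i} => v j) :=
      measurable_pi_lambda _ fun j => measurable_pi_apply _
    exact hZindep.comp hr measurable_id
  have hmap_pairZ : Measure.map (fun ω => (φ ω, Z ω)) ℙ = μA.prod ν := by
    rw [(indepFun_iff_map_prod_eq_prod_map_map hφm.aemeasurable hZ.aemeasurable).mp hφZind,
      hZlaw]
  -- MemLp transfers
  have hH2 : MemLp H 2 (μA.prod ν) := by
    rw [← hmap_pair]
    exact (memLp_map_measure_iff hHm.aestronglyMeasurable hpairm.aemeasurable).mpr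
      (hYc ▸ hY2)
  have hH1 : Integrable H (μA.prod ν) := hH2.integrable one_le_two
  have hHsq : Integrable (fun p => H p ^ 2) (μA.prod ν) :=
    (memLp_two_iff_integrable_sq hH2.aestronglyMeasurable).mp hH2
  have hY'2 : MemLp Y' 2 ℙ := by
    rw [hY'c]
    exact (memLp_map_measure_iff hHm.aestronglyMeasurable hpairZm.aemeasurable).mp
      (by rw [hmap_pairZ]; exact hH2)
  -- integrability of g, and MemLp g 2
  have hgint : Integrable g μA := hH1.integral_prod_left
  have hm'int : Integrable (fun x => ∫ t, H (x, t) ^ 2 ∂ν) μA := hHsq.integral_prod_left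
  have hg2 : MemLp g 2 μA := by
    rw [memLp_two_iff_integrable_sq hgsm.aestronglyMeasurable]
    refine hm'int.mono ((hgm.pow_const 2).aestronglyMeasurable) ?_
    have hsect : ∀ᵐ x ∂μA, Integrable (fun t => H (x, t) ^ 2) ν := hHsq.prod_right_ae
    filter_upwards [hsect] with x hx
    have hsm : AEStronglyMeasurable (fun t => H (x, t)) ν :=
      (hHm.comp measurable_prodMk_left).aestronglyMeasurable
    have hmem : MemLp (fun t => H (x, t)) 2 ν := (memLp_two_iff_integrable_sq hsm).mpr hx
    have hvar := variance_nonneg (fun t => H (x, t)) ν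
    rw [variance_eq_sub hmem] at hvar
    have h2 : (0:ℝ) ≤ ∫ t, H (x, t) ^ 2 ∂ν := integral_nonneg fun t => sq_nonneg _
    rw [Real.norm_eq_abs, Real.norm_eq_abs, abs_of_nonneg (sq_nonneg _), abs_of_nonneg h2]
    have h3 : (fun t => H (x,t)) ^ 2 = fun t => H (x,t) ^ 2 := rfl
    rw [h3] at hvar
    have : g x = ∫ t, H (x, t) ∂ν := rfl
    rw [this]
    linarith
  have hgf2 : MemLp (fun p : (({j : Fin d // j ≠ i} → ℝ) × ℝ) => g p.1) 2 (μA.prod ν) := by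
    have hmapfst : Measure.map Prod.fst (μA.prod ν) = μA := by
      simp [Measure.map_fst_prod]
    have := (memLp_map_measure_iff (f := (Prod.fst : (({j : Fin d // j ≠ i} → ℝ) × ℝ) → _))
      hgsm.aestronglyMeasurable measurable_fst.aemeasurable).mp (by rw [hmapfst]; exact hg2)
    exact this
  have hgfint : Integrable (fun p : (({j : Fin d // j ≠ i} → ℝ) × ℝ) => g p.1) (μA.prod ν) :=
    hgf2.integrable one_le_two
  -- pushforward integral computation helpers
  have key : ∀ k : (({j : Fin d // j ≠ i} → ℝ) × ℝ) → ℝ, Measurable k →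
      ∫ p, k p ∂(μA.prod ν) = ∫ ω, k (pair ω) ∂ℙ := by
    intro k hk
    rw [← hmap_pair, integral_map hpairm.aemeasurable hk.aestronglyMeasurable]
  have key' : ∀ k : (({j : Fin d // j ≠ i} → ℝ) × ℝ) → ℝ, Measurable k →
      ∫ p, k p ∂(μA.prod ν) = ∫ ω, k (φ ω, Z ω) ∂ℙ := by
    intro k hk
    rw [← hmap_pairZ, integral_map hpairZm.aemeasurable hk.aestronglyMeasurable]
  have keyφ : ∀ k : ({j : Fin d // j ≠ i} → ℝ) → ℝ, Measurable k →
      ∫ x, k x ∂μA = ∫ ω, k (φ ω) ∂ℙ := by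
    intro k hk
    rw [hμAdef, integral_map hφm.aemeasurable hk.aestronglyMeasurable]
  -- main integral identities
  have EY : ∫ ω, Y ω ∂ℙ = ∫ x, g x ∂μA := by
    have e0 : ∫ ω, Y ω ∂ℙ = ∫ ω, H (pair ω) ∂ℙ :=
      integral_congr_ae (Filter.Eventually.of_forall fun ω => hYp ω)
    rw [e0, ← key H hHm, integral_prod _ hH1]
  have EY' : ∫ ω, Y' ω ∂ℙ = ∫ x, g x ∂μA := by
    have e0 : ∫ ω, Y' ω ∂ℙ = ∫ ω, H (φ ω, Z ω) ∂ℙ :=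
      integral_congr_ae (Filter.Eventually.of_forall fun ω => hY'p ω)
    rw [e0, ← key' H hHm, integral_prod _ hH1]
  have EY2 : ∫ ω, Y ω ^ 2 ∂ℙ = ∫ p, H p ^ 2 ∂(μA.prod ν) := by
    rw [key (fun p => H p ^ 2) (hHm.pow_const 2)]
    refine integral_congr_ae (Filter.Eventually.of_forall fun ω => ?_)
    simp only [hYp]
  have EY'2 : ∫ ω, Y' ω ^ 2 ∂ℙ = ∫ p, H p ^ 2 ∂(μA.prod ν) := by
    rw [key' (fun p => H p ^ 2) (hHm.pow_const 2)]
    refine integral_congr_ae (Filter.Eventually.of_forall fun ω => ?_)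
    simp only [hY'p]
  have Cval : ∫ p, H p * g p.1 ∂(μA.prod ν) = ∫ x, g x ^ 2 ∂μA := by
    rw [integral_prod _ (l2mul hH2 hgf2)]
    have hinner : ∀ x, ∫ t, H (x, t) * g x ∂ν = g x ^ 2 := by
      intro x
      rw [integral_mul_const, pow_two]
    simp only [hinner]
  -- E[Y Y'] via triple product
  have hTind : IndepFun pair Z ℙ := by
    have hψ : Measurable (fun v : (Fin d → ℝ) =>
        ((fun j : {j : Fin d // j ≠ i} => v j), v i)) :=
      (measurable_pi_lambda _ fun j => measurable_pi_apply _).prodMk (measurable_pi_apply i)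
    exact hZindep.comp hψ measurable_id
  have hTm : Measurable (fun ω => (pair ω, Z ω)) := hpairm.prodMk hZ
  have hmapT : Measure.map (fun ω => (pair ω, Z ω)) ℙ = (μA.prod ν).prod ν := by
    rw [(indepFun_iff_map_prod_eq_prod_map_map hpairm.aemeasurable hZ.aemeasurable).mp hTind,
      hmap_pair, hZlaw]
  have hqm : Measurable (fun p : ((({j : Fin d // j ≠ i} → ℝ) × ℝ) × ℝ) => (p.1.1, p.2)) :=
    (measurable_fst.comp measurable_fst).prodMk measurable_snd
  have hmapq : Measure.map (fun p : ((({j : Fin d // j ≠ i} → ℝ) × ℝ) × ℝ) => (p.1.1, p.2))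
      ((μA.prod ν).prod ν) = μA.prod ν := by
    refine (Measure.prod_eq (μ := μA) (ν := ν) fun s t hs ht => ?_).symm
    rw [Measure.map_apply hqm (hs.prod ht)]
    have hpre : (fun p : ((({j : Fin d // j ≠ i} → ℝ) × ℝ) × ℝ) => (p.1.1, p.2)) ⁻¹' (s ×ˢ t)
        = (s ×ˢ (Set.univ : Set ℝ)) ×ˢ t := by
      ext p; simp [Set.mem_prod]
    rw [hpre, Measure.prod_prod, Measure.prod_prod]
    simp [measure_univ]
  have hmapfst3 : Measure.map Prod.fst ((μA.prod ν).prod ν) = μA.prod ν := by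
    simp [Measure.map_fst_prod]
  have hF : MemLp (fun p : ((({j : Fin d // j ≠ i} → ℝ) × ℝ) × ℝ) => H p.1) 2
      ((μA.prod ν).prod ν) := by
    have := (memLp_map_measure_iff
      (f := (Prod.fst : ((({j : Fin d // j ≠ i} → ℝ) × ℝ) × ℝ) → _))
      hHm.aestronglyMeasurable measurable_fst.aemeasurable).mp (by rw [hmapfst3]; exact hH2)
    exact this
  have hF' : MemLp (fun p : ((({j : Fin d // j ≠ i} → ℝ) × ℝ) × ℝ) => H (p.1.1, p.2)) 2
      ((μA.prod ν).prod ν) := by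
    have := (memLp_map_measure_iff
      (f := fun p : ((({j : Fin d // j ≠ i} → ℝ) × ℝ) × ℝ) => (p.1.1, p.2))
      hHm.aestronglyMeasurable hqm.aemeasurable).mp (by rw [hmapq]; exact hH2)
    exact this
  have hKint : Integrable (fun q : ((({j : Fin d // j ≠ i} → ℝ) × ℝ) × ℝ) =>
      H q.1 * H (q.1.1, q.2)) ((μA.prod ν).prod ν) := l2mul hF hF'
  have hKm : Measurable (fun q : ((({j : Fin d // j ≠ i} → ℝ) × ℝ) × ℝ) =>
      H q.1 * H (q.1.1, q.2)) := (hHm.comp measurable_fst).mul (hHm.comp hqm)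
  have C : ∫ ω, Y ω * Y' ω ∂ℙ = ∫ x, g x ^ 2 ∂μA := by
    have step1 : ∫ ω, Y ω * Y' ω ∂ℙ
        = ∫ q, H q.1 * H (q.1.1, q.2) ∂((μA.prod ν).prod ν) := by
      rw [← hmapT, integral_map hTm.aemeasurable hKm.aestronglyMeasurable]
      exact integral_congr_ae (Filter.Eventually.of_forall fun ω => by
        simp only [hYp ω, hY'p ω]; rfl)
    rw [step1, integral_prod _ hKint]
    have hinner : ∀ p : (({j : Fin d // j ≠ i} → ℝ) × ℝ),
        ∫ z, H p * H (p.1, z) ∂ν = H p * g p.1 := by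
      intro p; rw [integral_const_mul]
    simp only [hinner]
    exact Cval
  have D1 : ∫ ω, Y ω * g (φ ω) ∂ℙ = ∫ x, g x ^ 2 ∂μA := by
    have h2 := key (fun p => H p * g p.1) (hHm.mul (hgm.comp measurable_fst))
    have h3 : ∫ ω, Y ω * g (φ ω) ∂ℙ = ∫ ω, H (pair ω) * g ((pair ω).1) ∂ℙ := by
      refine integral_congr_ae (Filter.Eventually.of_forall fun ω => ?_)
      simp only [hYp]; rfl
    rw [h3, ← h2, Cval]
  have D2 : ∫ ω, g (φ ω) ^ 2 ∂ℙ = ∫ x, g x ^ 2 ∂μA :=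
    (keyφ (fun x => g x ^ 2) (hgm.pow_const 2)).symm
  have hgφ2 : MemLp (fun ω => g (φ ω)) 2 ℙ := by
    have := (memLp_map_measure_iff hgsm.aestronglyMeasurable hφm.aemeasurable).mp
      (by rw [← hμAdef]; exact hg2)
    exact this
  have hgφint : Integrable (fun ω => g (φ ω)) ℙ := hgφ2.integrable one_le_two
  have hYint : Integrable Y ℙ := hY2.integrable one_le_two
  have hY'int : Integrable Y' ℙ := hY'2.integrable one_le_two
  -- conditional expectation identification
  have hseteq : ∀ s, MeasurableSet[MeasurableSpace.comap φ inferInstance] s → ℙ s < ∞ →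
      ∫ x in s, g (φ x) ∂ℙ = ∫ x in s, Y x ∂ℙ := by
    rintro s ⟨A, hA, rfl⟩ -
    have hAm : MeasurableSet (A ×ˢ (Set.univ : Set ℝ)) := hA.prod MeasurableSet.univ
    have hpre : pair ⁻¹' (A ×ˢ (Set.univ : Set ℝ)) = φ ⁻¹' A := by
      ext ω; simp [hpairdef, Set.mem_prod]
    have hrest : (μA.prod ν).restrict (A ×ˢ (Set.univ : Set ℝ)) = (μA.restrict A).prod ν := by
      rw [← Measure.prod_restrict, Measure.restrict_univ]
    have e1 : ∫ x in φ ⁻¹' A, Y x ∂ℙ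
        = ∫ p in A ×ˢ (Set.univ : Set ℝ), H p ∂(μA.prod ν) := by
      rw [← hmap_pair, setIntegral_map hAm hHm.aestronglyMeasurable hpairm.aemeasurable, hpre]
      exact integral_congr_ae (ae_restrict_of_ae
        (Filter.Eventually.of_forall fun ω => hYp ω))
    have e2 : ∫ x in φ ⁻¹' A, g (φ x) ∂ℙ
        = ∫ p in A ×ˢ (Set.univ : Set ℝ), g p.1 ∂(μA.prod ν) := by
      rw [← hmap_pair, setIntegral_map (f := fun p : (({j : Fin d // j ≠ i} → ℝ) × ℝ) => g p.1)
        hAm (hgm.comp measurable_fst).aestronglyMeasurable hpairm.aemeasurable, hpre]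
    have e3 : ∫ p in A ×ˢ (Set.univ : Set ℝ), H p ∂(μA.prod ν) = ∫ x in A, g x ∂μA := by
      rw [show ((μA.prod ν).restrict (A ×ˢ (Set.univ : Set ℝ))) = (μA.restrict A).prod ν
        from hrest]
      rw [integral_prod _ (by rw [← hrest]; exact hH1.restrict)]
    have e4 : ∫ p in A ×ˢ (Set.univ : Set ℝ), g p.1 ∂(μA.prod ν) = ∫ x in A, g x ∂μA := by
      rw [show ((μA.prod ν).restrict (A ×ˢ (Set.univ : Set ℝ))) = (μA.restrict A).prod ν
        from hrest]
      rw [integral_prod _ (by rw [← hrest]; exact hgfint.restrict)]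
      simp [measure_univ]
    rw [e1, e2, e3, e4]
  have hφmm : @Measurable Ω _ (MeasurableSpace.comap φ inferInstance) _ φ := fun _ ht => ⟨_, ht, rfl⟩
  have hgφm' : AEStronglyMeasurable[MeasurableSpace.comap φ inferInstance] (fun ω => g (φ ω)) ℙ :=
    StronglyMeasurable.aestronglyMeasurable (Measurable.stronglyMeasurable (hgm.comp hφmm))
  have hcond : (fun ω => g (φ ω)) =ᵐ[ℙ] ℙ[Y|MeasurableSpace.comap φ inferInstance] :=
    ae_eq_condExp_of_forall_setIntegral_eq hm hYint
      (fun s _ _ => hgφint.integrableOn) hseteq hgφm'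
  -- the three statements
  have LHS : ∫ ω, (Y ω - Y' ω) ^ 2 ∂ℙ
      = ∫ p, H p ^ 2 ∂(μA.prod ν) - 2 * ∫ x, g x ^ 2 ∂μA + ∫ p, H p ^ 2 ∂(μA.prod ν) := by
    rw [sq_expand hY2 hY'2, EY2, EY'2, C]
  refine ⟨?_, ?_, ?_⟩
  · -- first identity
    have cov : ∫ ω, (Y ω - ∫ ω', Y ω' ∂ℙ) * (Y' ω - ∫ ω', Y' ω' ∂ℙ) ∂ℙ
        = ∫ x, g x ^ 2 ∂μA - (∫ x, g x ∂μA) ^ 2 := by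
      set a := ∫ ω', Y ω' ∂ℙ with ha
      set b := ∫ ω', Y' ω' ∂ℙ with hb
      have hexp : ∀ ω, (Y ω - a) * (Y' ω - b)
          = Y ω * Y' ω - a * Y' ω - b * Y ω + a * b := fun ω => by ring
      have hYY' : Integrable (fun ω => Y ω * Y' ω) ℙ := l2mul hY2 hY'2
      have i1 : Integrable (fun ω => Y ω * Y' ω - a * Y' ω) ℙ := by
        exact hYY'.sub (hY'int.const_mul a)
      have i2 : Integrable (fun ω => Y ω * Y' ω - a * Y' ω - b * Y ω) ℙ := by
        exact i1.sub (hYint.const_mul b)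
      rw [integral_congr_ae (Filter.Eventually.of_forall hexp)]
      rw [integral_add i2 (integrable_const _), integral_sub i1 (hYint.const_mul b),
        integral_sub hYY' (hY'int.const_mul a),
        integral_const_mul, integral_const_mul, integral_const]
      simp only [measure_univ, probReal_univ, ENNReal.toReal_one, smul_eq_mul, one_mul]
      rw [C, ← ha, ← hb, EY, EY']
      ring
    have hvar' : variance Y ℙ = ∫ ω, Y ω ^ 2 ∂ℙ - (∫ ω, Y ω ∂ℙ) ^ 2 := by
      rw [variance_eq_sub hY2]
      congr 1
    rw [cov, hvar', EY2, EY, LHS]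
    ring
  · -- second identity
    have hcY2 : MemLp (ℙ[Y|MeasurableSpace.comap φ inferInstance]) 2 ℙ := hgφ2.ae_eq hcond
    have hdiff : MemLp (fun ω => Y ω - (ℙ[Y|MeasurableSpace.comap φ inferInstance]) ω) 2 ℙ := hY2.sub hcY2
    have hWint : Integrable (fun ω' => (Y ω' - (ℙ[Y|MeasurableSpace.comap φ inferInstance]) ω') ^ 2) ℙ :=
      (memLp_two_iff_integrable_sq hdiff.aestronglyMeasurable).mp hdiff
    rw [integral_condExp hm]
    have hWeq : ∫ ω', (Y ω' - (ℙ[Y|MeasurableSpace.comap φ inferInstance]) ω') ^ 2 ∂ℙ = ∫ ω, (Y ω - g (φ ω)) ^ 2 ∂ℙ := by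
      refine integral_congr_ae ?_
      filter_upwards [hcond] with ω h
      rw [← h]
    rw [hWeq, sq_expand hY2 hgφ2, EY2, D1, D2, LHS]
    ring
  · -- third identity
    have hcY2 : MemLp (ℙ[Y|MeasurableSpace.comap φ inferInstance]) 2 ℙ := hgφ2.ae_eq hcond
    have hdiff : MemLp (fun ω => Y ω - (ℙ[Y|MeasurableSpace.comap φ inferInstance]) ω) 2 ℙ := hY2.sub hcY2
    have hWint : Integrable (fun ω' => (Y ω' - (ℙ[Y|MeasurableSpace.comap φ inferInstance]) ω') ^ 2) ℙ :=
      (memLp_two_iff_integrable_sq hdiff.aestronglyMeasurable).mp hdiff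
    rw [mul_comm, div_mul_cancel₀ _ (ne_of_gt hVar)]
    rw [integral_condExp hm]
    have hWeq : ∫ ω', (Y ω' - (ℙ[Y|MeasurableSpace.comap φ inferInstance]) ω') ^ 2 ∂ℙ = ∫ ω, (Y ω - g (φ ω)) ^ 2 ∂ℙ := by
      refine integral_congr_ae ?_
      filter_upwards [hcond] with ω h
      rw [← h]
    rw [hWeq, sq_expand hY2 hgφ2, EY2, D1, D2, LHS]
    ring
end

section
/- Sobol' pick-freeze identity: with X' the input vector where all coordinates except the i-th are resampled independently (X'_i = X_i, and X'_j independent copies of X_j for j ≠ i), one has Cov(f(X), f(X')) = Var(E[f(X)|X_i]), hence the first-order Sobol' index equals S_i = Cov(f(X), f(X'))/Var(f(X)). -/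
open MeasureTheory ProbabilityTheory

private lemma variance_congr_ae {Ω : Type*} {m : MeasurableSpace Ω} {μ : Measure Ω}
    {f g : Ω → ℝ} (h : f =ᵐ[μ] g) : variance f μ = variance g μ := by
  unfold ProbabilityTheory.variance ProbabilityTheory.evariance
  congr 1
  have hint : μ[f] = μ[g] := integral_congr_ae h
  refine lintegral_congr_ae ?_
  filter_upwards [h] with ω hω
  rw [hω, hint]

private lemma aux_indep {Ω : Type*} {mΩ : MeasurableSpace Ω} {μ : Measure Ω}
    {T : Type*} (Z : T → Ω → ℝ) (hZ : ∀ t, Measurable (Z t))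
    (hind : iIndepFun Z μ)
    {ι κ : Type*} [Fintype ι] [Fintype κ] [DecidableEq T]
    (e : ι → T) (e' : κ → T) (hdisj : ∀ a b, e a ≠ e' b) :
    IndepFun (fun ω (a : ι) => Z (e a) ω) (fun ω (b : κ) => Z (e' b) ω) μ := by
  classical
  have hd : Disjoint (Finset.univ.image e) (Finset.univ.image e') := by
    rw [Finset.disjoint_left]
    rintro t ht ht'
    obtain ⟨a, -, rfl⟩ := Finset.mem_image.1 ht
    obtain ⟨b, -, hb⟩ := Finset.mem_image.1 ht'
    exact hdisj a b hb.symm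
  have h := hind.indepFun_finset (Finset.univ.image e) (Finset.univ.image e') hd hZ
  have h2 := h.comp (φ := fun v (a : ι) => v ⟨e a, Finset.mem_image_of_mem e (Finset.mem_univ a)⟩)
      (ψ := fun v (b : κ) => v ⟨e' b, Finset.mem_image_of_mem e' (Finset.mem_univ b)⟩)
      (measurable_pi_lambda _ fun _ => measurable_pi_apply _)
      (measurable_pi_lambda _ fun _ => measurable_pi_apply _)
  exact h2

private lemma aux_law_pi {Ω : Type*} {mΩ : MeasurableSpace Ω} {μ : Measure Ω}
    [IsProbabilityMeasure μ]
    {T : Type*} [DecidableEq T] (Z : T → Ω → ℝ) (hZ : ∀ t, Measurable (Z t))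
    (hind : iIndepFun Z μ)
    {ι : Type*} [Fintype ι] (e : ι → T) (he : Function.Injective e) :
    Measure.map (fun ω (a : ι) => Z (e a) ω) μ
      = Measure.pi fun a => Measure.map (Z (e a)) μ := by
  classical
  haveI : ∀ a : ι, IsProbabilityMeasure (Measure.map (Z (e a)) μ) :=
    fun a => Measure.isProbabilityMeasure_map (hZ (e a)).aemeasurable
  symm
  apply Measure.pi_eq
  intro s hs
  set sets : T → Set ℝ := fun t => if h : ∃ a, e a = t then s h.choose else Set.univ with hsets
  have hse : ∀ a, sets (e a) = s a := by
    intro a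
    have hex : ∃ a', e a' = e a := ⟨a, rfl⟩
    simp only [hsets, dif_pos hex]
    exact congrArg s (he hex.choose_spec)
  have hmeas : ∀ t, MeasurableSet (sets t) := by
    intro t; simp only [hsets]; split_ifs with h
    · exact hs _
    · exact MeasurableSet.univ
  have hpre : (fun ω (a : ι) => Z (e a) ω) ⁻¹' Set.univ.pi s
      = ⋂ t ∈ Finset.univ.image e, Z t ⁻¹' sets t := by
    ext ω
    simp only [Set.mem_preimage, Set.mem_univ_pi, Set.mem_iInter, Finset.mem_image,
      Finset.mem_univ, true_and]
    constructor
    · rintro hω t ⟨a, rfl⟩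
      rw [hse]; exact hω a
    · intro hω a
      have := hω (e a) ⟨a, rfl⟩
      rwa [hse] at this
  rw [Measure.map_apply (measurable_pi_lambda _ fun a => hZ (e a)) (MeasurableSet.univ_pi hs),
    hpre, hind.measure_inter_preimage_eq_mul _ (fun t _ => hmeas t),
    Finset.prod_image (fun a _ b _ hab => he hab)]
  exact Finset.prod_congr rfl fun a _ => by
    rw [hse, Measure.map_apply (hZ (e a)) (hs a)]

theorem sobol_pick_freeze_identity
    {Ω : Type*} [MeasureSpace Ω] [IsProbabilityMeasure (ℙ : Measure Ω)]
    {d : ℕ} (X W : Fin d → Ω → ℝ) (i : Fin d)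
    (hXmeas : ∀ j, Measurable (X j)) (hWmeas : ∀ j, Measurable (W j))
    (hindep : iIndepFun (Sum.elim X W) ℙ)
    (hWlaw : ∀ j, Measure.map (W j) ℙ = Measure.map (X j) ℙ)
    (X' : Fin d → Ω → ℝ)
    (hX' : X' = fun j => if j = i then X i else W j)
    (f : (Fin d → ℝ) → ℝ) (hf : Measurable f)
    (Y Y' : Ω → ℝ)
    (hYdef : Y = fun ω => f (fun j => X j ω))
    (hY'def : Y' = fun ω => f (fun j => X' j ω))
    (hY2 : MemLp Y 2 ℙ) (hVar : 0 < variance Y ℙ) :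
    (∫ ω, (Y ω - ∫ ω', Y ω' ∂ℙ) * (Y' ω - ∫ ω', Y' ω' ∂ℙ) ∂ℙ) =
      variance (ℙ[Y | MeasurableSpace.comap (X i) inferInstance]) ℙ ∧
    variance (ℙ[Y | MeasurableSpace.comap (X i) inferInstance]) ℙ / variance Y ℙ =
      (∫ ω, (Y ω - ∫ ω', Y ω' ∂ℙ) * (Y' ω - ∫ ω', Y' ω' ∂ℙ) ∂ℙ) / variance Y ℙ := by
  classical
  suffices h1 : (∫ ω, (Y ω - ∫ ω', Y ω' ∂ℙ) * (Y' ω - ∫ ω', Y' ω' ∂ℙ) ∂ℙ) =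
      variance (ℙ[Y | MeasurableSpace.comap (X i) inferInstance]) ℙ by
    exact ⟨h1, by rw [h1]⟩

  -- setup
  have hZmeas : ∀ t, Measurable (Sum.elim X W t) := by
    rintro (j | j)
    · exact hXmeas j
    · exact hWmeas j
  -- the index type of "other" coordinates
  let A := {j : Fin d // j ≠ i}
  let V1 : Ω → A → ℝ := fun ω a => X a.1 ω
  let V2 : Ω → A → ℝ := fun ω a => W a.1 ω
  have hV1m : Measurable V1 := measurable_pi_lambda _ fun a => hXmeas a.1
  have hV2m : Measurable V2 := measurable_pi_lambda _ fun a => hWmeas a.1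
  set μ0 : Measure ℝ := Measure.map (X i) ℙ with hμ0
  set ν : Measure (A → ℝ) := Measure.map V1 ℙ with hν
  haveI : IsProbabilityMeasure μ0 := Measure.isProbabilityMeasure_map (hXmeas i).aemeasurable
  haveI : IsProbabilityMeasure ν := Measure.isProbabilityMeasure_map hV1m.aemeasurable
  -- patch function
  let patch : ℝ × (A → ℝ) → (Fin d → ℝ) := fun p j => if hj : j = i then p.1 else p.2 ⟨j, hj⟩
  have hpatch : Measurable patch := by
    apply measurable_pi_lambda
    intro j
    by_cases hj : j = i
    · simpa only [patch, dif_pos hj] using measurable_fst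
    · simp only [patch, dif_neg hj]; exact (measurable_pi_apply (⟨j, hj⟩ : A)).comp measurable_snd
  let h : ℝ × (A → ℝ) → ℝ := fun p => f (patch p)
  have hhm : Measurable h := hf.comp hpatch
  let g : ℝ → ℝ := fun t => ∫ v, h (t, v) ∂ν
  have hgsm : StronglyMeasurable g := hhm.stronglyMeasurable.integral_prod_right'
  have hgm : Measurable g := hgsm.measurable
  -- function identities
  have hYeq : Y = fun ω => h (X i ω, V1 ω) := by
    rw [hYdef]; funext ω
    show f _ = f _
    congr 1; funext j
    by_cases hj : j = i
    · subst hj; simp only [patch, dif_pos rfl]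
    · simp only [patch, dif_neg hj, V1]
  have hY'eq : Y' = fun ω => h (X i ω, V2 ω) := by
    rw [hY'def, hX']; funext ω
    show f _ = f _
    congr 1; funext j
    by_cases hj : j = i
    · subst hj; simp [patch]
    · simp only [patch, dif_neg hj, if_neg hj, V2]
  -- independence
  have hI12 : IndepFun V1 V2 ℙ := by
    have := aux_indep (Sum.elim X W) hZmeas hindep
      (fun a : A => Sum.inl a.1) (fun b : A => Sum.inr b.1) (fun a b => by simp)
    exact this
  have hI : IndepFun (X i) (fun ω => (V1 ω, V2 ω)) ℙ := by
    have h0 := aux_indep (Sum.elim X W) hZmeas hindep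
      (fun _ : Unit => (Sum.inl i : Fin d ⊕ Fin d))
      (Sum.elim (fun a : A => Sum.inl a.1) (fun b : A => Sum.inr b.1))
      (by
        rintro a (b | b)
        · simp only [Sum.elim_inl, ne_eq, Sum.inl.injEq]
          exact fun hh => b.2 hh.symm
        · simp)
    have h2 := h0.comp (φ := fun v => v ())
      (ψ := fun (q : (A ⊕ A) → ℝ) => ((fun a => q (Sum.inl a) : A → ℝ), (fun b => q (Sum.inr b) : A → ℝ)))
      (measurable_pi_apply (X := fun _ : Unit => ℝ) ())
      ((measurable_pi_lambda (fun (q : (A ⊕ A) → ℝ) (a : A) => q (Sum.inl a)) fun _ => measurable_pi_apply _).prodMk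
        (measurable_pi_lambda (fun (q : (A ⊕ A) → ℝ) (b : A) => q (Sum.inr b)) fun _ => measurable_pi_apply _))
    exact h2
  have hI01 : IndepFun (X i) V1 ℙ := by
    have := hI.comp measurable_id (measurable_fst (α := A → ℝ) (β := A → ℝ))
    exact this
  -- laws
  have hνpi : ν = Measure.pi fun a : A => Measure.map (X a.1) ℙ := by
    have := aux_law_pi (Sum.elim X W) hZmeas hindep
      (fun a : A => (Sum.inl a.1 : Fin d ⊕ Fin d))
      (fun a b hab => Subtype.ext (Sum.inl.injEq _ _ ▸ hab))
    simpa only [Sum.elim_inl] using this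
  have hν2 : Measure.map V2 ℙ = ν := by
    have := aux_law_pi (Sum.elim X W) hZmeas hindep
      (fun a : A => (Sum.inr a.1 : Fin d ⊕ Fin d))
      (fun a b hab => Subtype.ext (Sum.inr.injEq _ _ ▸ hab))
    simp only [Sum.elim_inr] at this
    rw [hνpi]
    rw [this]
    congr 1
    funext a
    exact hWlaw a.1
  have hlaw12 : Measure.map (fun ω => (V1 ω, V2 ω)) ℙ = ν.prod ν := by
    rw [(indepFun_iff_map_prod_eq_prod_map_map hV1m.aemeasurable hV2m.aemeasurable).1 hI12, hν2]
  set T3 : Ω → ℝ × ((A → ℝ) × (A → ℝ)) := fun ω => (X i ω, (V1 ω, V2 ω)) with hT3def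
  have hT3 : Measurable T3 := (hXmeas i).prodMk (hV1m.prodMk hV2m)
  set π : Measure (ℝ × ((A → ℝ) × (A → ℝ))) := μ0.prod (ν.prod ν) with hπ
  have hlawT : Measure.map T3 ℙ = π := by
    rw [hπ, hμ0,
      (indepFun_iff_map_prod_eq_prod_map_map (hXmeas i).aemeasurable
        (hV1m.prodMk hV2m).aemeasurable).1 hI, hlaw12]
  have hlaw01 : Measure.map (fun ω => (X i ω, V1 ω)) ℙ = μ0.prod ν := by
    rw [hμ0, hν,
      (indepFun_iff_map_prod_eq_prod_map_map (hXmeas i).aemeasurable hV1m.aemeasurable).1 hI01]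
  -- F, F'
  let F : ℝ × ((A → ℝ) × (A → ℝ)) → ℝ := fun p => h (p.1, p.2.1)
  let F' : ℝ × ((A → ℝ) × (A → ℝ)) → ℝ := fun p => h (p.1, p.2.2)
  have hFm : Measurable F := hhm.comp (measurable_fst.prodMk measurable_snd.fst)
  have hF'm : Measurable F' := hhm.comp (measurable_fst.prodMk measurable_snd.snd)
  have hYF : Y = fun ω => F (T3 ω) := hYeq
  have hY'F : Y' = fun ω => F' (T3 ω) := hY'eq
  -- MemLp on the product space
  have hF2 : MemLp F 2 π := by
    rw [← hlawT]
    refine (memLp_map_measure_iff (by rw [hlawT]; exact hFm.aestronglyMeasurable)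
      hT3.aemeasurable).2 ?_
    have : F ∘ T3 = Y := by rw [hYF]; rfl
    rw [this]; exact hY2
  -- swap invariance
  let sw : ℝ × ((A → ℝ) × (A → ℝ)) → ℝ × ((A → ℝ) × (A → ℝ)) := fun p => (p.1, (p.2.2, p.2.1))
  have hswm : Measurable sw := measurable_fst.prodMk (measurable_snd.snd.prodMk measurable_snd.fst)
  have hswmap : Measure.map sw π = π := by
    have hsweq : sw = Prod.map id Prod.swap := rfl
    rw [hπ, hsweq, ← Measure.map_prod_map _ _ measurable_id measurable_swap,
      Measure.map_id, Measure.prod_swap]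
  have hF'2 : MemLp F' 2 π := by
    have hcomp : F ∘ sw = F' := rfl
    have h1 : MemLp F 2 (Measure.map sw π) := by rw [hswmap]; exact hF2
    have h2 := (memLp_map_measure_iff (by rw [hswmap]; exact hFm.aestronglyMeasurable)
      hswm.aemeasurable).1 h1
    rwa [hcomp] at h2
  -- integrability
  have hFint : Integrable F π := hF2.integrable one_le_two
  have hF'int : Integrable F' π := hF'2.integrable one_le_two
  have hFF'int : Integrable (fun p => F p * F' p) π := by
    refine Integrable.mono' (hF2.integrable_sq.add hF'2.integrable_sq)
      (hFm.mul hF'm).aestronglyMeasurable (Filter.Eventually.of_forall fun p => ?_)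
    simp only [Pi.add_apply]
    rw [Real.norm_eq_abs, abs_mul]
    nlinarith [sq_nonneg (|F p| - |F' p|), sq_abs (F p), sq_abs (F' p),
      abs_nonneg (F p), abs_nonneg (F' p)]
  have intY : Integrable Y ℙ := hY2.integrable one_le_two
  have intY' : Integrable Y' ℙ := by
    rw [hY'F]
    have := (integrable_map_measure (by rw [hlawT]; exact hF'm.aestronglyMeasurable)
      hT3.aemeasurable).1 (by rw [hlawT]; exact hF'int)
    exact this
  have intYY' : Integrable (fun ω => Y ω * Y' ω) ℙ := by
    have := (integrable_map_measure (by rw [hlawT]; exact (hFm.mul hF'm).aestronglyMeasurable)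
      hT3.aemeasurable).1 (by rw [hlawT]; exact hFF'int)
    have heq : ((fun p => F p * F' p) ∘ T3) = fun ω => Y ω * Y' ω := by
      rw [hYF, hY'F]; rfl
    rw [← heq]; exact this
  -- inner integrals
  have inner1 : ∀ t : ℝ, (∫ q, h (t, q.1) ∂(ν.prod ν)) = g t := by
    intro t
    have hmeq : (∫ q, h (t, q.1) ∂(ν.prod ν))
        = ∫ v, h (t, v) ∂(Measure.map Prod.fst (ν.prod ν)) :=
      (integral_map measurable_fst.aemeasurable
        (hhm.comp measurable_prodMk_left).aestronglyMeasurable).symm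
    rw [hmeq, Measure.map_fst_prod, measure_univ, one_smul]
  have inner2 : ∀ t : ℝ, (∫ q, h (t, q.2) ∂(ν.prod ν)) = g t := by
    intro t
    have hmeq : (∫ q, h (t, q.2) ∂(ν.prod ν))
        = ∫ v, h (t, v) ∂(Measure.map Prod.snd (ν.prod ν)) :=
      (integral_map measurable_snd.aemeasurable
        (hhm.comp measurable_prodMk_left).aestronglyMeasurable).symm
    rw [hmeq, Measure.map_snd_prod, measure_univ, one_smul]
  -- transfer of integrals
  have keyInt : ∀ (φ : ℝ × ((A → ℝ) × (A → ℝ)) → ℝ), Measurable φ →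
      (∫ ω, φ (T3 ω) ∂ℙ) = ∫ p, φ p ∂π := by
    intro φ hφ
    rw [← hlawT, integral_map hT3.aemeasurable (by rw [hlawT]; exact hφ.aestronglyMeasurable)]
  -- expectations
  have hEY : (∫ ω, Y ω ∂ℙ) = ∫ t, g t ∂μ0 := by
    rw [hYF, keyInt F hFm, hπ, integral_prod _ hFint]
    exact integral_congr_ae (Filter.Eventually.of_forall fun t => inner1 t)
  have hEY' : (∫ ω, Y' ω ∂ℙ) = ∫ t, g t ∂μ0 := by
    rw [hY'F, keyInt F' hF'm, hπ, integral_prod _ hF'int]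
    exact integral_congr_ae (Filter.Eventually.of_forall fun t => inner2 t)
  have hEYY' : (∫ ω, Y ω * Y' ω ∂ℙ) = ∫ t, (g t) ^ 2 ∂μ0 := by
    have heq : (fun ω => Y ω * Y' ω) = fun ω => (fun p => F p * F' p) (T3 ω) := by
      rw [hYF, hY'F]
    rw [heq, keyInt (fun p => F p * F' p) (hFm.mul hF'm), hπ, integral_prod _ hFF'int]
    refine integral_congr_ae (Filter.Eventually.of_forall fun t => ?_)
    exact (integral_prod_mul (fun v => h (t, v)) (fun w => h (t, w))).trans
      (pow_two (g t)).symm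
  -- covariance expansion
  have hcov : (∫ ω, (Y ω - ∫ ω', Y ω' ∂ℙ) * (Y' ω - ∫ ω', Y' ω' ∂ℙ) ∂ℙ)
      = (∫ ω, Y ω * Y' ω ∂ℙ) - (∫ ω, Y ω ∂ℙ) * ∫ ω, Y' ω ∂ℙ := by
    set a := ∫ ω', Y ω' ∂ℙ
    set b := ∫ ω', Y' ω' ∂ℙ
    have hexp : (fun ω => (Y ω - a) * (Y' ω - b))
        = fun ω => Y ω * Y' ω - b * Y ω - a * Y' ω + a * b := by
      funext ω; ring
    have e1 : Integrable (fun ω => Y ω * Y' ω - b * Y ω) ℙ := intYY'.sub (intY.const_mul b)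
    have e2 : Integrable (fun ω => Y ω * Y' ω - b * Y ω - a * Y' ω) ℙ :=
      e1.sub (intY'.const_mul a)
    rw [hexp]
    rw [integral_add e2 (integrable_const (a * b))]
    rw [integral_sub e1 (intY'.const_mul a)]
    rw [integral_sub intYY' (intY.const_mul b)]
    rw [integral_const_mul, integral_const_mul, integral_const, probReal_univ]
    simp only [ENNReal.toReal_one, smul_eq_mul, one_mul]
    ring
  -- L² facts for g
  have hhL2 : MemLp h 2 (μ0.prod ν) := by
    rw [← hlaw01]
    refine (memLp_map_measure_iff (by rw [hlaw01]; exact hhm.aestronglyMeasurable)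
      ((hXmeas i).prodMk hV1m).aemeasurable).2 ?_
    have : h ∘ (fun ω => (X i ω, V1 ω)) = Y := by rw [hYeq]; rfl
    rw [this]; exact hY2
  have hh2int : Integrable (fun p => h p ^ 2) (μ0.prod ν) := hhL2.integrable_sq
  have hslice : ∀ᵐ t ∂μ0, Integrable (fun v => h (t, v) ^ 2) ν := hh2int.prod_right_ae
  have hGint : Integrable (fun t => ∫ v, h (t, v) ^ 2 ∂ν) μ0 := hh2int.integral_prod_left
  have hg2 : Integrable (fun t => g t ^ 2) μ0 := by
    refine Integrable.mono' hGint (hgm.pow_const 2).aestronglyMeasurable ?_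
    filter_upwards [hslice] with t ht
    have hmem : MemLp (fun v => h (t, v)) 2 ν :=
      (memLp_two_iff_integrable_sq (hhm.comp measurable_prodMk_left).aestronglyMeasurable).2 ht
    have hvar2 := variance_nonneg (fun v => h (t, v)) ν
    rw [variance_eq_sub hmem] at hvar2
    have hpw : (∫ v, ((fun v => h (t, v)) ^ 2) v ∂ν) = ∫ v, h (t, v) ^ 2 ∂ν := rfl
    rw [hpw] at hvar2
    rw [Real.norm_eq_abs, abs_of_nonneg (sq_nonneg _)]
    have : g t = ∫ v, h (t, v) ∂ν := rfl
    rw [this]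
    linarith
  have hgL2 : MemLp g 2 μ0 := (memLp_two_iff_integrable_sq hgsm.aestronglyMeasurable).2 hg2
  have hgXiL2 : MemLp (fun ω => g (X i ω)) 2 ℙ := by
    have := (memLp_map_measure_iff (by rw [← hμ0]; exact hgsm.aestronglyMeasurable)
      (hXmeas i).aemeasurable).1 (by rw [← hμ0]; exact hgL2)
    exact this
  have hhL1 : Integrable h (μ0.prod ν) := hhL2.integrable one_le_two
  have hgint : Integrable g μ0 := hhL1.integral_prod_left
  have hgXint : Integrable (fun ω => g (X i ω)) ℙ := by
    have := (integrable_map_measure (by rw [← hμ0]; exact hgsm.aestronglyMeasurable)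
      (hXmeas i).aemeasurable).1 (by rw [← hμ0]; exact hgint)
    exact this
  -- set-integral identities
  have hset : ∀ B : Set ℝ, MeasurableSet B →
      (∫ ω in (X i) ⁻¹' B, Y ω ∂ℙ) = ∫ t in B, g t ∂μ0 := by
    intro B hB
    have hpre : T3 ⁻¹' (B ×ˢ (Set.univ : Set ((A → ℝ) × (A → ℝ)))) = (X i) ⁻¹' B := by
      ext ω; simp [hT3def]
    have h1 : (∫ ω in (X i) ⁻¹' B, Y ω ∂ℙ)
        = ∫ ω in T3 ⁻¹' (B ×ˢ Set.univ), F (T3 ω) ∂ℙ := by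
      rw [hpre, hYF]
    rw [h1, ← setIntegral_map (hB.prod MeasurableSet.univ)
      (by rw [hlawT]; exact hFm.aestronglyMeasurable) hT3.aemeasurable, hlawT, hπ]
    have hres : (μ0.prod (ν.prod ν)).restrict (B ×ˢ (Set.univ : Set ((A → ℝ) × (A → ℝ))))
        = (μ0.restrict B).prod (ν.prod ν) := by
      rw [← Measure.prod_restrict, Measure.restrict_univ]
    have hresint : Integrable F ((μ0.restrict B).prod (ν.prod ν)) := by
      rw [← hres]; exact hFint.restrict
    calc ∫ p in B ×ˢ (Set.univ : Set ((A → ℝ) × (A → ℝ))), F p ∂(μ0.prod (ν.prod ν))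
        = ∫ p, F p ∂((μ0.restrict B).prod (ν.prod ν)) := by rw [← hres]
      _ = ∫ t, (∫ q, F (t, q) ∂(ν.prod ν)) ∂(μ0.restrict B) := integral_prod _ hresint
      _ = ∫ t in B, g t ∂μ0 :=
          integral_congr_ae (Filter.Eventually.of_forall fun t => inner1 t)
  have hset2 : ∀ B : Set ℝ, MeasurableSet B →
      (∫ ω in (X i) ⁻¹' B, g (X i ω) ∂ℙ) = ∫ t in B, g t ∂μ0 := by
    intro B hB
    rw [hμ0, setIntegral_map hB (by rw [← hμ0]; exact hgsm.aestronglyMeasurable)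
      (hXmeas i).aemeasurable]
  -- conditional expectation identification
  have hm : MeasurableSpace.comap (X i) inferInstance ≤ (inferInstance : MeasurableSpace Ω) :=
    (hXmeas i).comap_le
  haveI : IsFiniteMeasure (Measure.trim ℙ hm) := by
    constructor
    rw [trim_measurableSet_eq hm
      (@MeasurableSet.univ Ω (MeasurableSpace.comap (X i) inferInstance))]
    exact measure_lt_top _ _
  haveI : SigmaFinite (Measure.trim ℙ hm) := inferInstance
  have hXimi : Measurable[MeasurableSpace.comap (X i) inferInstance] (X i) :=
    measurable_iff_comap_le.mpr le_rfl
  have hcondexp : (fun ω => g (X i ω)) =ᵐ[ℙ] ℙ[Y | MeasurableSpace.comap (X i) inferInstance] := by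
    refine ae_eq_condExp_of_forall_setIntegral_eq hm intY
      (fun s _ _ => hgXint.integrableOn)
      (fun s hs _ => ?_)
      (StronglyMeasurable.aestronglyMeasurable (Measurable.stronglyMeasurable (hgm.comp hXimi)))
    obtain ⟨B, hB, rfl⟩ := hs
    rw [hset2 B hB, hset B hB]
  -- variance computation
  have hvc : variance (ℙ[Y | MeasurableSpace.comap (X i) inferInstance]) ℙ = variance (fun ω => g (X i ω)) ℙ :=
    (variance_congr_ae hcondexp).symm
  have hmean : (∫ ω, g (X i ω) ∂ℙ) = ∫ t, g t ∂μ0 := by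
    rw [hμ0, integral_map (hXmeas i).aemeasurable
      (by rw [← hμ0]; exact hgsm.aestronglyMeasurable)]
  have hsqmean : (∫ ω, g (X i ω) ^ 2 ∂ℙ) = ∫ t, g t ^ 2 ∂μ0 := by
    rw [hμ0, integral_map (hXmeas i).aemeasurable
      (by rw [← hμ0]; exact (hgm.pow_const 2).aestronglyMeasurable)]
  have hvar2 : variance (fun ω => g (X i ω)) ℙ
      = (∫ t, g t ^ 2 ∂μ0) - (∫ t, g t ∂μ0) ^ 2 := by
    rw [variance_eq_sub hgXiL2, ← hsqmean, ← hmean]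
    rfl
  rw [hcov, hEYY', hEY, hEY', hvc, hvar2]
  ring
end
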